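/- The assignment x ↦ x, y ↦ t·x determines a well-defined ring homomorphism Δ : A → B (since (t·x)^l = x^l in B), and Δ is injective. -/

import Mathlib

open MvPolynomial

noncomputable section

/-- `A = ℤ[x,y]/(x^l − y^l)`, with `x = X 0`, `y = X 1`. -/
def IA (l : ℕ) : Ideal (MvPolynomial (Fin 2) ℤ) := Ideal.span {X 0 ^ l - X 1 ^ l}

/-- `B = ℤ[x,t]/(t^l − 1)`, with `x = X 0`, `t = X 1`. -/
def IB (l : ℕ) : Ideal (MvPolynomial (Fin 2) ℤ) := Ideal.span {X 1 ^ l - 1}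

abbrev Aq (l : ℕ) := MvPolynomial (Fin 2) ℤ ⧸ IA l
abbrev Bq (l : ℕ) := MvPolynomial (Fin 2) ℤ ⧸ IB l

open Polynomial

abbrev Rr := Polynomial ℤ
def e1 : MvPolynomial (Fin 1) ℤ ≃ₐ[ℤ] Rr :=
  (MvPolynomial.finSuccEquiv ℤ 0).trans (Polynomial.mapAlgEquiv (MvPolynomial.isEmptyAlgEquiv ℤ (Fin 0)))
def E : MvPolynomial (Fin 2) ℤ ≃ₐ[ℤ] Polynomial Rr :=
  (MvPolynomial.renameEquiv ℤ (Equiv.swap (0 : Fin 2) 1)).trans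
    ((MvPolynomial.finSuccEquiv ℤ 1).trans (Polynomial.mapAlgEquiv e1))
theorem E_X0 : E (X 0) = Polynomial.C Polynomial.X := by
  have h1 : (X (1 : Fin 2) : MvPolynomial (Fin 2) ℤ) = X (Fin.succ 0) := rfl
  simp only [E, e1, AlgEquiv.trans_apply, MvPolynomial.renameEquiv_apply,
    MvPolynomial.rename_X, Equiv.swap_apply_left, h1, MvPolynomial.finSuccEquiv_X_succ,
    Polynomial.coe_mapAlgEquiv, Polynomial.map_C, MvPolynomial.finSuccEquiv_X_zero,
    Polynomial.map_X]
  simp [MvPolynomial.finSuccEquiv_X_zero]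
theorem E_X1 : E (X 1) = Polynomial.X := by
  simp only [E, e1, AlgEquiv.trans_apply, MvPolynomial.renameEquiv_apply,
    MvPolynomial.rename_X, Equiv.swap_apply_right, MvPolynomial.finSuccEquiv_X_zero,
    Polynomial.coe_mapAlgEquiv, Polynomial.map_X]

def fP (l : ℕ) : Polynomial Rr := Polynomial.X ^ l - Polynomial.C (Polynomial.X ^ l)
def gP (l : ℕ) : Polynomial Rr := Polynomial.X ^ l - 1

theorem fP_monic {l : ℕ} (hl : 1 ≤ l) : (fP l).Monic :=
  Polynomial.monic_X_pow_sub_C _ (by omega)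
theorem gP_monic {l : ℕ} (hl : 1 ≤ l) : (gP l).Monic := by
  have := Polynomial.monic_X_pow_sub_C (1 : Rr) (n := l) (by omega)
  simpa [gP] using this

theorem mapIA (l : ℕ) : (IA l).map (E : MvPolynomial (Fin 2) ℤ →+* Polynomial Rr)
    = Ideal.span {fP l} := by
  have hE : ⇑(E : MvPolynomial (Fin 2) ℤ →+* Polynomial Rr) = ⇑E := rfl
  rw [IA, Ideal.map_span, Set.image_singleton, map_sub, map_pow, map_pow, hE, E_X0, E_X1]
  rw [show (Polynomial.C (Polynomial.X : Rr)) ^ l - Polynomial.X ^ l = -(fP l) by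
    rw [fP, ← Polynomial.C_pow]; ring]
  exact Ideal.span_singleton_neg _

theorem mapIB (l : ℕ) : (IB l).map (E : MvPolynomial (Fin 2) ℤ →+* Polynomial Rr)
    = Ideal.span {gP l} := by
  have hE : ⇑(E : MvPolynomial (Fin 2) ℤ →+* Polynomial Rr) = ⇑E := rfl
  rw [IB, Ideal.map_span, Set.image_singleton, map_sub, map_pow, map_one, hE, E_X1]
  rfl

def eA (l : ℕ) : Aq l ≃+* Polynomial Rr ⧸ Ideal.span {fP l} :=
  Ideal.quotientEquiv (IA l) (Ideal.span {fP l}) E.toRingEquiv (mapIA l).symm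
def eB (l : ℕ) : Bq l ≃+* Polynomial Rr ⧸ Ideal.span {gP l} :=
  Ideal.quotientEquiv (IB l) (Ideal.span {gP l}) E.toRingEquiv (mapIB l).symm

theorem root_pow_eq (l : ℕ) : (AdjoinRoot.root (gP l)) ^ l = 1 := by
  have h := AdjoinRoot.eval₂_root (gP l)
  have : (AdjoinRoot.root (gP l)) ^ l - 1 = 0 := by
    have h2 : Polynomial.eval₂ (AdjoinRoot.of (gP l)) (AdjoinRoot.root (gP l))
        (Polynomial.X ^ l - 1) = 0 := h
    simpa using h2
  linear_combination this

theorem aeval_cond (l : ℕ) :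
    Polynomial.aeval (AdjoinRoot.of (gP l) Polynomial.X * AdjoinRoot.root (gP l)) (fP l) = 0 := by
  rw [fP]
  simp only [map_sub, map_pow, Polynomial.aeval_X, Polynomial.aeval_C, mul_pow, root_pow_eq,
    mul_one]
  exact sub_self _

def D (l : ℕ) : AdjoinRoot (fP l) →ₐ[Rr] AdjoinRoot (gP l) :=
  AdjoinRoot.liftAlgHom (fP l) (Algebra.ofId Rr _)
    (AdjoinRoot.of (gP l) Polynomial.X * AdjoinRoot.root (gP l)) (aeval_cond l)

theorem D_mk (l : ℕ) (g : Polynomial Rr) : D l (AdjoinRoot.mk (fP l) g)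
    = Polynomial.aeval (AdjoinRoot.of (gP l) Polynomial.X * AdjoinRoot.root (gP l)) g := rfl

def Dq (l : ℕ) : (Polynomial Rr ⧸ Ideal.span {fP l}) →+* (Polynomial Rr ⧸ Ideal.span {gP l}) :=
  (D l).toRingHom

theorem Dq_mk_CX (l : ℕ) :
    Dq l (Ideal.Quotient.mk (Ideal.span {fP l}) (Polynomial.C Polynomial.X))
      = Ideal.Quotient.mk (Ideal.span {gP l}) (Polynomial.C Polynomial.X) := by
  show (D l) (AdjoinRoot.mk (fP l) (Polynomial.C Polynomial.X))
      = AdjoinRoot.mk (gP l) (Polynomial.C Polynomial.X)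
  rw [D_mk, Polynomial.aeval_C, AdjoinRoot.algebraMap_eq]
  rfl

theorem Dq_mk_X (l : ℕ) :
    Dq l (Ideal.Quotient.mk (Ideal.span {fP l}) Polynomial.X)
      = Ideal.Quotient.mk (Ideal.span {gP l}) (Polynomial.X * Polynomial.C Polynomial.X) := by
  show (D l) (AdjoinRoot.mk (fP l) Polynomial.X)
      = AdjoinRoot.mk (gP l) (Polynomial.X * Polynomial.C Polynomial.X)
  rw [D_mk, Polynomial.aeval_X, map_mul]
  rw [show AdjoinRoot.mk (gP l) Polynomial.X = AdjoinRoot.root (gP l) from rfl]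
  rw [show AdjoinRoot.mk (gP l) (Polynomial.C Polynomial.X)
      = AdjoinRoot.of (gP l) Polynomial.X from rfl]
  ring

theorem D_inj {l : ℕ} (hl : 1 ≤ l) : Function.Injective (D l) := by
  have hf := fP_monic hl
  have hg := gP_monic hl
  rw [injective_iff_map_eq_zero]
  intro a ha
  obtain ⟨P, rfl⟩ := AdjoinRoot.mk_surjective a
  set p := P %ₘ (fP l) with hp
  have hmk : AdjoinRoot.mk (fP l) P = AdjoinRoot.mk (fP l) p := by
    rw [AdjoinRoot.mk_eq_mk]
    have := Polynomial.modByMonic_add_div P (fP l)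
    exact ⟨P /ₘ fP l, by linear_combination -this⟩
  rw [hmk] at ha ⊢
  -- compute D on mk f p
  have hD : D l (AdjoinRoot.mk (fP l) p)
      = AdjoinRoot.mk (gP l) (p.comp (Polynomial.C Polynomial.X * Polynomial.X)) := by
    rw [D_mk]
    have hmul : AdjoinRoot.of (gP l) Polynomial.X * AdjoinRoot.root (gP l)
        = AdjoinRoot.mk (gP l) (Polynomial.C Polynomial.X * Polynomial.X) := by
      rw [map_mul, AdjoinRoot.mk_X]; rfl
    rw [hmul]
    rw [Polynomial.aeval_def, AdjoinRoot.algebraMap_eq, AdjoinRoot.of,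
      ← Polynomial.hom_eval₂]
    rfl
  rw [hD] at ha
  rw [AdjoinRoot.mk_eq_zero] at ha
  -- degree bound
  have hq : Polynomial.C (Polynomial.X : Rr) * Polynomial.X ≠
      Polynomial.C ((Polynomial.C (Polynomial.X : Rr) * Polynomial.X).coeff 0) := by
    intro h
    have := congrArg Polynomial.natDegree h
    rw [Polynomial.natDegree_C] at this
    rw [Polynomial.natDegree_C_mul_X _ (by exact Polynomial.X_ne_zero)] at this
    omega
  have hcomp0 : p.comp (Polynomial.C Polynomial.X * Polynomial.X) = 0 := by
    by_cases hp0 : p = 0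
    · simp [hp0]
    · refine Polynomial.eq_zero_of_dvd_of_degree_lt ha ?_
      have hdegp : p.degree < (fP l).degree := Polynomial.degree_modByMonic_lt P hf
      have hnd : p.natDegree < l := by
        have := Polynomial.natDegree_lt_natDegree hp0 hdegp
        rwa [fP, Polynomial.natDegree_X_pow_sub_C] at this
      have hndc : (p.comp (Polynomial.C Polynomial.X * Polynomial.X)).natDegree = p.natDegree := by
        rw [Polynomial.natDegree_comp, Polynomial.natDegree_C_mul_X _ Polynomial.X_ne_zero,
          mul_one]
      have hcne : p.comp (Polynomial.C Polynomial.X * Polynomial.X) ≠ 0 := by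
        rw [Ne, Polynomial.comp_eq_zero_iff]
        push_neg
        exact ⟨hp0, fun _ => hq⟩
      have hgdeg : (gP l).degree = l := by
        have := Polynomial.degree_X_pow_sub_C (R := Rr) (a := 1) (by omega : 0 < l)
        simpa [gP] using this
      rw [hgdeg, Polynomial.degree_eq_natDegree hcne, hndc]
      exact_mod_cast hnd
  -- conclude p = 0
  have hp0 : p = 0 := by
    rcases Polynomial.comp_eq_zero_iff.mp hcomp0 with h | ⟨_, h⟩
    · exact h
    · exact absurd h hq
  rw [hp0, map_zero]

theorem eA_mk (l : ℕ) (p : MvPolynomial (Fin 2) ℤ) :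
    (eA l) (Ideal.Quotient.mk (IA l) p) = Ideal.Quotient.mk (Ideal.span {fP l}) (E p) := by
  rfl

theorem eB_mk (l : ℕ) (p : MvPolynomial (Fin 2) ℤ) :
    (eB l) (Ideal.Quotient.mk (IB l) p) = Ideal.Quotient.mk (Ideal.span {gP l}) (E p) := by
  rfl

/-- The assignment `x ↦ x`, `y ↦ t·x` determines a well-defined ring homomorphism
`Δ : A → B`, and `Δ` is injective. -/
theorem stmt_0 (l : ℕ) (hl : 1 ≤ l) :
    ∃ Δ : Aq l →+* Bq l,
      Δ (Ideal.Quotient.mk (IA l) (X 0)) = Ideal.Quotient.mk (IB l) (X 0) ∧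
      Δ (Ideal.Quotient.mk (IA l) (X 1)) = Ideal.Quotient.mk (IB l) (X 1 * X 0) ∧
      Function.Injective Δ := by
  refine ⟨((eB l).symm.toRingHom.comp ((Dq l).comp (eA l).toRingHom)), ?_, ?_, ?_⟩
  · simp only [RingHom.comp_apply, RingEquiv.toRingHom_eq_coe, RingHom.coe_coe]
    rw [eA_mk, E_X0, Dq_mk_CX]
    apply (eB l).injective
    rw [RingEquiv.apply_symm_apply, eB_mk, E_X0]
  · simp only [RingHom.comp_apply, RingEquiv.toRingHom_eq_coe, RingHom.coe_coe]
    rw [eA_mk, E_X1, Dq_mk_X]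
    apply (eB l).injective
    rw [RingEquiv.apply_symm_apply, eB_mk,
      show E (X 1 * X 0) = Polynomial.X * Polynomial.C Polynomial.X by
        rw [map_mul, E_X0, E_X1], map_mul]
  · have hDq : Function.Injective (Dq l) := D_inj hl
    exact (eB l).symm.injective.comp (hDq.comp (eA l).injective)
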